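/- (Theorem 2, first-hitting-time asymptotics from 0, in polynomial form) (a) If C < ∞ and D = ∞, then L_∞ < ∞, the limits ξ_i are strictly positive with Σ_{i=1}^∞ 1/ξ_i < ∞, and for every real s < 0, lim_{n→∞} 1/Q_n(s) = (1 + μ_0 L_∞)^{−1} ∏_{i=1}^∞ ξ_i/(ξ_i − s), the infinite product converging. (b) If C = ∞, then for every real s < 0, lim_{n→∞} 1/Q_n(s) = 0. -/

import Mathlib

open Filter Topology ENNReal MeasureTheory
open Polynomial

lemma aux_one_add_sum_le_prod (F : Finset ℕ) (t : ℕ → ℝ) (ht : ∀ i ∈ F, 0 ≤ t i) :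
    1 + ∑ i ∈ F, t i ≤ ∏ i ∈ F, (1 + t i) := by
  classical
  induction F using Finset.induction_on with
  | empty => simp
  | @insert a s ha ih =>
    rw [Finset.sum_insert ha, Finset.prod_insert ha]
    have h1 : 0 ≤ t a := ht a (Finset.mem_insert_self a s)
    have h2 : ∀ i ∈ s, 0 ≤ t i := fun i hi => ht i (Finset.mem_insert_of_mem hi)
    have h3 := ih h2
    have h4 : 0 ≤ ∑ i ∈ s, t i := Finset.sum_nonneg h2
    nlinarith

lemma aux_prod_subset {f : ℕ → ℝ} (h0 : ∀ i, 0 ≤ f i) (h1 : ∀ i, f i ≤ 1) {F G : Finset ℕ}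
    (h : F ⊆ G) : ∏ i ∈ G, f i ≤ ∏ i ∈ F, f i := by
  rw [← Finset.prod_sdiff h]
  have h2 : ∏ i ∈ G \ F, f i ≤ 1 :=
    Finset.prod_le_one (fun i _ => h0 i) (fun i _ => h1 i)
  have h3 : 0 ≤ ∏ i ∈ F, f i := Finset.prod_nonneg (fun i _ => h0 i)
  calc (∏ i ∈ G \ F, f i) * ∏ i ∈ F, f i ≤ 1 * ∏ i ∈ F, f i :=
        mul_le_mul_of_nonneg_right h2 h3
    _ = ∏ i ∈ F, f i := one_mul _

lemma aux_hasProd {f : ℕ → ℝ} (h0 : ∀ i, 0 < f i) (h1 : ∀ i, f i ≤ 1) {G : ℝ}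
    (hlim : Tendsto (fun n => ∏ i ∈ Finset.range n, f i) atTop (𝓝 G)) :
    HasProd f G := by
  have hGle : ∀ n, G ≤ ∏ i ∈ Finset.range n, f i := fun n =>
    le_of_tendsto hlim (eventually_atTop.2 ⟨n, fun m hm =>
      aux_prod_subset (fun i => (h0 i).le) h1 (Finset.range_subset_range.2 hm)⟩)
  rw [HasProd]
  refine tendsto_order.2 ⟨?_, ?_⟩
  · intro a ha
    refine Eventually.of_forall (fun F => ?_)
    obtain ⟨n, hn⟩ := F.exists_nat_subset_range
    have h2 : ∏ i ∈ Finset.range n, f i ≤ ∏ i ∈ F, f i :=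
      aux_prod_subset (fun i => (h0 i).le) h1 hn
    exact lt_of_lt_of_le ha (le_trans (hGle n) h2)
  · intro a ha
    obtain ⟨m, hm⟩ := (hlim.eventually (eventually_lt_nhds ha)).exists
    filter_upwards [eventually_ge_atTop (Finset.range m)] with F hF
    exact lt_of_le_of_lt (aux_prod_subset (fun i => (h0 i).le) h1 hF) hm

noncomputable def auxP (lam mu : ℕ → ℝ) : ℕ → ℝ[X]
  | 0 => 1
  | 1 => Polynomial.C (lam 0)⁻¹ * (Polynomial.C (lam 0 + mu 0) - Polynomial.X)
  | (n+2) => Polynomial.C (lam (n+1))⁻¹ *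
      ((Polynomial.C (lam (n+1) + mu (n+1)) - Polynomial.X) * auxP lam mu (n+1)
        - Polynomial.C (mu (n+1)) * auxP lam mu n)

variable {lam mu : ℕ → ℝ} {q : ℕ → ℝ → ℝ}

lemma auxP_eval (hlam : ∀ n, 0 < lam n)
    (hq0 : ∀ x, q 0 x = 1)
    (hq1 : ∀ x, lam 0 * q 1 x = lam 0 + mu 0 - x)
    (hqrec : ∀ n x, lam (n + 1) * q (n + 2) x
      = (lam (n + 1) + mu (n + 1) - x) * q (n + 1) x - mu (n + 1) * q n x) :
    ∀ n x, (auxP lam mu n).eval x = q n x := by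
  intro n
  induction n using Nat.twoStepInduction with
  | zero => intro x; simp [auxP, hq0]
  | one =>
    intro x
    have h := hq1 x
    have hl := (hlam 0).ne'
    simp only [auxP, Polynomial.eval_mul, Polynomial.eval_C, Polynomial.eval_sub,
      Polynomial.eval_X]
    field_simp
    linarith
  | more n ih1 ih2 =>
    intro x
    have h := hqrec n x
    have hl := (hlam (n + 1)).ne'
    simp only [auxP, Polynomial.eval_mul, Polynomial.eval_C, Polynomial.eval_sub,
      Polynomial.eval_X, ih1, ih2]
    field_simp
    linarith

lemma auxP_coeff (hlam : ∀ n, 0 < lam n) :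
    ∀ n, (auxP lam mu n).natDegree ≤ n ∧
      (auxP lam mu n).coeff n = (-1) ^ n * ∏ i ∈ Finset.range n, (lam i)⁻¹ := by
  intro n
  induction n using Nat.twoStepInduction with
  | zero => simp [auxP]
  | one =>
    constructor
    · refine le_trans (Polynomial.natDegree_mul_le) ?_
      simp only [Polynomial.natDegree_C, zero_add]
      refine le_trans (Polynomial.natDegree_sub_le _ _) ?_
      simp
    · simp [auxP, Polynomial.coeff_sub, mul_comm]
  | more n ih1 ih2 =>
    have hd1 := ih1.1
    have hd2 := ih2.1
    constructor
    · refine le_trans (Polynomial.natDegree_mul_le) ?_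
      simp only [Polynomial.natDegree_C, zero_add]
      refine le_trans (Polynomial.natDegree_sub_le _ _) ?_
      refine max_le (le_trans Polynomial.natDegree_mul_le ?_)
        (le_trans Polynomial.natDegree_mul_le ?_)
      · have : (Polynomial.C (lam (n+1) + mu (n+1)) - Polynomial.X).natDegree ≤ 1 := by
          refine le_trans (Polynomial.natDegree_sub_le _ _) ?_
          simp
        omega
      · simp only [Polynomial.natDegree_C, zero_add]
        omega
    · have hc1 : (auxP lam mu n).coeff (n + 2) = 0 :=
        Polynomial.coeff_eq_zero_of_natDegree_lt (by omega)
      have hc2 : (auxP lam mu (n+1)).coeff (n + 2) = 0 :=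
        Polynomial.coeff_eq_zero_of_natDegree_lt (by omega)
      have hx : (Polynomial.X * auxP lam mu (n+1)).coeff (n + 2)
          = (auxP lam mu (n+1)).coeff (n + 1) := by
        rw [Polynomial.coeff_X_mul]
      simp only [auxP, Polynomial.coeff_C_mul, Polynomial.coeff_sub, sub_mul,
        Polynomial.coeff_C_mul, hx, hc1, hc2, ih2.2, mul_zero]
      have hp : ∏ i ∈ Finset.range (n+2), (lam i)⁻¹
          = (∏ i ∈ Finset.range (n+1), (lam i)⁻¹) * (lam (n+1))⁻¹ :=
        Finset.prod_range_succ (fun i => (lam i)⁻¹) (n+1)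
      rw [hp, pow_succ]
      ring

lemma aux_zmono (z : ℕ → ℕ → ℝ)
    (hzlt : ∀ n i, 1 ≤ i → i + 1 ≤ n → z n i < z n (i + 1)) :
    ∀ n i j, 1 ≤ i → i < j → j ≤ n → z n i < z n j := by
  intro n i j h1 hij hj
  induction j with
  | zero => omega
  | succ j ih =>
    rcases eq_or_lt_of_le (Nat.lt_succ_iff.mp hij) with h | h
    · subst h; exact hzlt n i h1 hj
    · exact lt_trans (ih h (by omega)) (hzlt n j (by omega) hj)

lemma aux_ratio (hlam : ∀ n, 0 < lam n)
    (hq0 : ∀ x, q 0 x = 1)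
    (hq1 : ∀ x, lam 0 * q 1 x = lam 0 + mu 0 - x)
    (hqrec : ∀ n x, lam (n + 1) * q (n + 2) x
      = (lam (n + 1) + mu (n + 1) - x) * q (n + 1) x - mu (n + 1) * q n x)
    (z : ℕ → ℕ → ℝ)
    (hzpos : ∀ n i, 1 ≤ i → i ≤ n → 0 < z n i)
    (hzlt : ∀ n i, 1 ≤ i → i + 1 ≤ n → z n i < z n (i + 1))
    (hzero : ∀ n i, 1 ≤ i → i ≤ n → q n (z n i) = 0)
    (n : ℕ) (s : ℝ) :
    q n s = q n 0 * ∏ i ∈ Finset.Icc 1 n, ((z n i - s) / z n i) := by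
  have heval := auxP_eval hlam hq0 hq1 hqrec
  rcases Nat.eq_zero_or_pos n with rfl | hn
  · simp [hq0]
  set p := auxP lam mu n with hp
  have hco := auxP_coeff (mu := mu) hlam n
  have hlc : p.coeff n ≠ 0 := by
    rw [hco.2]
    have h1 : (0:ℝ) < ∏ i ∈ Finset.range n, (lam i)⁻¹ :=
      Finset.prod_pos (fun i _ => inv_pos.2 (hlam i))
    have h2 : ((-1:ℝ)) ^ n ≠ 0 := by positivity
    exact mul_ne_zero h2 h1.ne'
  have hpne : p ≠ 0 := fun h => hlc (by simp [h])
  have hdeg : p.natDegree = n := le_antisymm hco.1 (Polynomial.le_natDegree_of_ne_zero hlc)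
  set M : Multiset ℝ := (Finset.Icc 1 n).val.map (z n) with hM
  have hMnodup : M.Nodup := by
    refine Multiset.Nodup.map_on ?_ (Finset.Icc 1 n).nodup
    intro i hi j hj hij
    rw [Finset.mem_val, Finset.mem_Icc] at hi hj
    by_contra hne
    rcases Nat.lt_or_ge i j with h | h
    · exact absurd hij (ne_of_lt (aux_zmono z hzlt n i j hi.1 h hj.2))
    · have : j < i := by omega
      exact absurd hij.symm (ne_of_lt (aux_zmono z hzlt n j i hj.1 this hi.2))
  have hMle : M ≤ p.roots := by
    rw [Multiset.le_iff_count]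
    intro a
    by_cases ha : a ∈ M
    · have h1 : M.count a = 1 := Multiset.count_eq_one_of_mem hMnodup ha
      have hmem : a ∈ p.roots := by
        rw [hM, Multiset.mem_map] at ha
        obtain ⟨i, hi, rfl⟩ := ha
        rw [Finset.mem_val, Finset.mem_Icc] at hi
        rw [Polynomial.mem_roots']
        exact ⟨hpne, by rw [Polynomial.IsRoot.def, heval n _, hzero n i hi.1 hi.2]⟩
      have h2 : 1 ≤ p.roots.count a := Multiset.one_le_count_iff_mem.2 hmem
      omega
    · rw [Multiset.count_eq_zero_of_notMem ha]
      exact Nat.zero_le _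
  have hcard : Multiset.card M = n := by
    rw [hM, Multiset.card_map]; simp [Nat.card_Icc]
  have hroots : M = p.roots := by
    refine Multiset.eq_of_le_of_card_le hMle ?_
    rw [hcard]
    exact le_trans p.card_roots' (le_of_eq hdeg)
  have hsplits : Polynomial.Splits p :=
    (Polynomial.splits_iff_card_roots).2 (by rw [← hroots, hcard, hdeg])
  have hfac := Polynomial.Splits.eq_prod_roots hsplits
  have hs : ∀ y : ℝ, q n y = p.leadingCoeff * ∏ i ∈ Finset.Icc 1 n, (y - z n i) := by
    intro y
    have hqy : q n y = Polynomial.eval y p := (heval n y).symm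
    have hev : Polynomial.eval y p = p.leadingCoeff * ∏ i ∈ Finset.Icc 1 n, (y - z n i) := by
      conv_lhs => rw [hfac]
      rw [Polynomial.eval_mul, Polynomial.eval_C, Polynomial.eval_multiset_prod, ← hroots, hM,
        Multiset.map_map, Multiset.map_map]
      congr 1
      rw [Finset.prod_eq_multiset_prod]
      apply congrArg
      apply Multiset.map_congr rfl
      intro i hi
      simp
    rw [hqy, hev]
  rw [hs s, hs 0, mul_assoc, ← Finset.prod_mul_distrib]
  congr 1
  apply Finset.prod_congr rfl
  intro i hi
  rw [Finset.mem_Icc] at hi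
  have hz := hzpos n i hi.1 hi.2
  field_simp
  ring

variable {lam mu pi : ℕ → ℝ} {q : ℕ → ℝ → ℝ}

lemma aux_pi_pos (hlam : ∀ n, 0 < lam n) (hmu : ∀ n, 1 ≤ n → 0 < mu n)
    (hpi0 : pi 0 = 1) (hpi : ∀ n, pi (n + 1) = pi n * lam n / mu (n + 1)) :
    ∀ n, 0 < pi n := by
  intro n
  induction n with
  | zero => rw [hpi0]; norm_num
  | succ n ih =>
    rw [hpi n]
    exact div_pos (mul_pos ih (hlam n)) (hmu (n+1) (by omega))

lemma aux_identity (hlam : ∀ n, 0 < lam n) (hmu : ∀ n, 1 ≤ n → 0 < mu n)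
    (hpi0 : pi 0 = 1) (hpi : ∀ n, pi (n + 1) = pi n * lam n / mu (n + 1))
    (hq0 : ∀ x, q 0 x = 1)
    (hq1 : ∀ x, lam 0 * q 1 x = lam 0 + mu 0 - x)
    (hqrec : ∀ n x, lam (n + 1) * q (n + 2) x
      = (lam (n + 1) + mu (n + 1) - x) * q (n + 1) x - mu (n + 1) * q n x) :
    ∀ n x, lam n * pi n * (q (n + 1) x - q n x)
      = mu 0 - x * ∑ j ∈ Finset.range (n + 1), pi j * q j x := by
  intro n x
  induction n with
  | zero =>
    simp only [zero_add, Finset.sum_range_one, hpi0, hq0, one_mul, mul_one]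
    linear_combination hq1 x
  | succ n ih =>
    have h1 := hqrec n x
    have h3 : mu (n+1) * pi (n+1) = lam n * pi n := by
      rw [hpi n]
      field_simp [(hmu (n+1) (by omega)).ne']
    rw [Finset.sum_range_succ]
    linear_combination pi (n+1) * h1 + ih + (q (n+1) x - q n x) * h3

lemma aux_a_formula (hlam : ∀ n, 0 < lam n) (hmu : ∀ n, 1 ≤ n → 0 < mu n)
    (hpi0 : pi 0 = 1) (hpi : ∀ n, pi (n + 1) = pi n * lam n / mu (n + 1))
    (hq0 : ∀ x, q 0 x = 1)
    (hq1 : ∀ x, lam 0 * q 1 x = lam 0 + mu 0 - x)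
    (hqrec : ∀ n x, lam (n + 1) * q (n + 2) x
      = (lam (n + 1) + mu (n + 1) - x) * q (n + 1) x - mu (n + 1) * q n x) :
    ∀ n, q n 0 = 1 + mu 0 * ∑ m ∈ Finset.range n, (lam m * pi m)⁻¹ := by
  intro n
  induction n with
  | zero => simp [hq0]
  | succ n ih =>
    have h := aux_identity hlam hmu hpi0 hpi hq0 hq1 hqrec n 0
    have hlp : lam n * pi n ≠ 0 :=
      (mul_pos (hlam n) (aux_pi_pos hlam hmu hpi0 hpi n)).ne'
    rw [Finset.sum_range_succ, mul_add, ← add_assoc, ← ih]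
    simp only [zero_mul, sub_zero] at h
    field_simp at h ⊢
    have h' : q (n + 1) 0 - q n 0 = mu 0 / (lam n * pi n) := (eq_div_iff hlp).2 (by rw [← h]; ring)
    linarith

lemma aux_q_facts (hlam : ∀ n, 0 < lam n) (hmu0 : 0 ≤ mu 0) (hmu : ∀ n, 1 ≤ n → 0 < mu n)
    (hpi0 : pi 0 = 1) (hpi : ∀ n, pi (n + 1) = pi n * lam n / mu (n + 1))
    (hq0 : ∀ x, q 0 x = 1)
    (hq1 : ∀ x, lam 0 * q 1 x = lam 0 + mu 0 - x)
    (hqrec : ∀ n x, lam (n + 1) * q (n + 2) x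
      = (lam (n + 1) + mu (n + 1) - x) * q (n + 1) x - mu (n + 1) * q n x)
    {s : ℝ} (hs : s < 0) :
    ∀ n, (1 ≤ q n s) ∧ (q n s ≤ q (n + 1) s) ∧
      (q n s + (-s) * (lam n * pi n)⁻¹ * (∑ j ∈ Finset.range (n + 1), pi j) ≤ q (n + 1) s) ∧
      (q (n + 1) s ≤ q n s *
        (1 + (lam n * pi n)⁻¹ * (mu 0 + (-s) * ∑ j ∈ Finset.range (n + 1), pi j))) := by
  have hpip := aux_pi_pos hlam hmu hpi0 hpi
  have hid := aux_identity hlam hmu hpi0 hpi hq0 hq1 hqrec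
  intro n
  induction n using Nat.strong_induction_on with
  | _ n ih =>
    have hone : ∀ j, j ≤ n → 1 ≤ q j s := by
      intro j hj
      cases j with
      | zero => rw [hq0]
      | succ m => exact le_trans (ih m (by omega)).1 (ih m (by omega)).2.1
    have hstep : ∀ m, m < n → q m s ≤ q (m + 1) s := fun m hm => (ih m hm).2.1
    have hmono : ∀ j, j ≤ n → q j s ≤ q n s := by
      intro j hj
      have key : ∀ d m, m + d ≤ n → q m s ≤ q (m + d) s := by
        intro d
        induction d with
        | zero => intro m _; simp
        | succ d ihd =>
          intro m hm
          exact le_trans (ihd m (by omega)) (hstep (m + d) (by omega))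
      have h := key (n - j) j (by omega)
      rwa [show j + (n - j) = n from by omega] at h
    set S := ∑ j ∈ Finset.range (n + 1), pi j * q j s with hSdef
    set K := ∑ j ∈ Finset.range (n + 1), pi j with hKdef
    have hP : 0 < lam n * pi n := mul_pos (hlam n) (hpip n)
    have hKpos : 0 < K := Finset.sum_pos (fun j _ => hpip j) (by simp)
    have hKS : K ≤ S := by
      apply Finset.sum_le_sum
      intro j hj
      rw [Finset.mem_range] at hj
      nlinarith [hpip j, hone j (by omega)]
    have hSK : S ≤ K * q n s := by
      rw [Finset.sum_mul]
      apply Finset.sum_le_sum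
      intro j hj
      rw [Finset.mem_range] at hj
      nlinarith [hpip j, hmono j (by omega)]
    have hq1n := hone n le_rfl
    have hE : q (n + 1) s - q n s = (lam n * pi n)⁻¹ * (mu 0 - s * S) := by
      have h := hid n s
      field_simp
      rw [← hSdef] at h
      have h' : q (n + 1) s - q n s = (mu 0 - s * S) / (lam n * pi n) := (eq_div_iff hP.ne').2 (by rw [← h]; ring)
      linarith
    have hinv : 0 < (lam n * pi n)⁻¹ := inv_pos.2 hP
    refine ⟨hq1n, ?_, ?_, ?_⟩
    · have h0 : 0 ≤ mu 0 - s * S := by nlinarith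
      nlinarith [mul_nonneg hinv.le h0]
    · have h1 : (-s) * K ≤ mu 0 - s * S := by nlinarith
      have h2 : (-s) * (lam n * pi n)⁻¹ * K ≤ (lam n * pi n)⁻¹ * (mu 0 - s * S) := by
        rw [mul_comm (-s) _, mul_assoc]
        exact mul_le_mul_of_nonneg_left h1 hinv.le
      linarith
    · have h1 : mu 0 - s * S ≤ q n s * (mu 0 + (-s) * K) := by nlinarith
      have h2 : (lam n * pi n)⁻¹ * (mu 0 - s * S)
          ≤ (lam n * pi n)⁻¹ * (q n s * (mu 0 + (-s) * K)) :=
        mul_le_mul_of_nonneg_left h1 hinv.le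
      nlinarith

lemma aux_q_lower (hlam : ∀ n, 0 < lam n) (hmu0 : 0 ≤ mu 0) (hmu : ∀ n, 1 ≤ n → 0 < mu n)
    (hpi0 : pi 0 = 1) (hpi : ∀ n, pi (n + 1) = pi n * lam n / mu (n + 1))
    (hq0 : ∀ x, q 0 x = 1)
    (hq1 : ∀ x, lam 0 * q 1 x = lam 0 + mu 0 - x)
    (hqrec : ∀ n x, lam (n + 1) * q (n + 2) x
      = (lam (n + 1) + mu (n + 1) - x) * q (n + 1) x - mu (n + 1) * q n x)
    {s : ℝ} (hs : s < 0) :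
    ∀ n, 1 + (-s) * ∑ m ∈ Finset.range n,
        (lam m * pi m)⁻¹ * (∑ j ∈ Finset.range (m + 1), pi j) ≤ q n s := by
  intro n
  induction n with
  | zero => simp [hq0]
  | succ n ih =>
    have h := (aux_q_facts hlam hmu0 hmu hpi0 hpi hq0 hq1 hqrec hs n).2.2.1
    rw [Finset.sum_range_succ, mul_add]
    have h' : (-s) * ((lam n * pi n)⁻¹ * ∑ j ∈ Finset.range (n + 1), pi j)
        = (-s) * (lam n * pi n)⁻¹ * ∑ j ∈ Finset.range (n + 1), pi j := by ring
    rw [h']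
    linarith

lemma aux_q_upper (hlam : ∀ n, 0 < lam n) (hmu0 : 0 ≤ mu 0) (hmu : ∀ n, 1 ≤ n → 0 < mu n)
    (hpi0 : pi 0 = 1) (hpi : ∀ n, pi (n + 1) = pi n * lam n / mu (n + 1))
    (hq0 : ∀ x, q 0 x = 1)
    (hq1 : ∀ x, lam 0 * q 1 x = lam 0 + mu 0 - x)
    (hqrec : ∀ n x, lam (n + 1) * q (n + 2) x
      = (lam (n + 1) + mu (n + 1) - x) * q (n + 1) x - mu (n + 1) * q n x)
    {s : ℝ} (hs : s < 0) :
    ∀ n, q n s ≤ Real.exp (∑ m ∈ Finset.range n,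
        (lam m * pi m)⁻¹ * (mu 0 + (-s) * ∑ j ∈ Finset.range (m + 1), pi j)) := by
  have hpip := aux_pi_pos hlam hmu hpi0 hpi
  intro n
  induction n with
  | zero => simp [hq0]
  | succ n ih =>
    have hf := aux_q_facts hlam hmu0 hmu hpi0 hpi hq0 hq1 hqrec hs n
    set c := (lam n * pi n)⁻¹ * (mu 0 + (-s) * ∑ j ∈ Finset.range (n + 1), pi j) with hc
    have hKpos : 0 < ∑ j ∈ Finset.range (n + 1), pi j :=
      Finset.sum_pos (fun j _ => hpip j) (by simp)
    have hc0 : 0 ≤ c := by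
      apply mul_nonneg (inv_nonneg.2 (mul_pos (hlam n) (hpip n)).le)
      nlinarith
    rw [Finset.sum_range_succ, Real.exp_add]
    have h1 : q (n + 1) s ≤ q n s * (1 + c) := hf.2.2.2
    have h2 : q n s * (1 + c) ≤ Real.exp (∑ m ∈ Finset.range n,
        (lam m * pi m)⁻¹ * (mu 0 + (-s) * ∑ j ∈ Finset.range (m + 1), pi j)) * (1 + c) :=
      mul_le_mul_of_nonneg_right ih (by linarith)
    have h3 : (1 + c) ≤ Real.exp c := by linarith [Real.add_one_le_exp c]
    have h4 : Real.exp (∑ m ∈ Finset.range n,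
        (lam m * pi m)⁻¹ * (mu 0 + (-s) * ∑ j ∈ Finset.range (m + 1), pi j)) * (1 + c)
        ≤ Real.exp (∑ m ∈ Finset.range n,
        (lam m * pi m)⁻¹ * (mu 0 + (-s) * ∑ j ∈ Finset.range (m + 1), pi j)) * Real.exp c :=
      mul_le_mul_of_nonneg_left h3 (Real.exp_nonneg _)
    linarith

lemma aux_prod_le_exp (F : Finset ℕ) (t : ℕ → ℝ) (ht : ∀ i ∈ F, 0 ≤ t i) :
    ∏ i ∈ F, (1 + t i) ≤ Real.exp (∑ i ∈ F, t i) := by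
  rw [Real.exp_sum]
  apply Finset.prod_le_prod
  · intro i hi; linarith [ht i hi]
  · intro i hi; linarith [Real.add_one_le_exp (t i)]

lemma aux_Icc_range (f : ℕ → ℝ) (m : ℕ) :
    ∑ i ∈ Finset.Icc 1 m, f i = ∑ i ∈ Finset.range m, f (i + 1) := by
  induction m with
  | zero => simp
  | succ m ih => rw [Finset.sum_Icc_succ_top (by omega), ih, Finset.sum_range_succ]

lemma aux_Icc_range_prod (f : ℕ → ℝ) (m : ℕ) :
    ∏ i ∈ Finset.Icc 1 m, f i = ∏ i ∈ Finset.range m, f (i + 1) := by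
  induction m with
  | zero => simp
  | succ m ih => rw [Finset.prod_Icc_succ_top (by omega), ih, Finset.prod_range_succ]

lemma aux_ratio_mono {s x y : ℝ} (hs : s < 0) (hx : 0 < x) (hxy : x ≤ y) :
    x / (x - s) ≤ y / (y - s) := by
  have h1 : 0 < x - s := by linarith
  have h2 : 0 < y - s := by linarith
  rw [div_le_div_iff₀ h1 h2]
  nlinarith
theorem stmt17
    (lam mu : ℕ → ℝ) (pi : ℕ → ℝ)
    (hlam : ∀ n, 0 < lam n) (hmu0 : 0 ≤ mu 0) (hmu : ∀ n, 1 ≤ n → 0 < mu n)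
    (hpi0 : pi 0 = 1) (hpi : ∀ n, pi (n + 1) = pi n * lam n / mu (n + 1))
    (K : ℕ → ℝ≥0∞) (hK : ∀ n, K n = ∑ i ∈ Finset.range (n + 1), ENNReal.ofReal (pi i))
    (Kinf Linf C D : ℝ≥0∞)
    (hKinf : Kinf = ∑' i, ENNReal.ofReal (pi i))
    (hLinf : Linf = ∑' i, ENNReal.ofReal (1 / (lam i * pi i)))
    (hC : C = ∑' n, ENNReal.ofReal (1 / (lam n * pi n)) * K n)
    (hD : D = ∑' n, ENNReal.ofReal (1 / (lam n * pi n)) * (Kinf - K n))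
    (Q : ℕ → ℕ → ℝ → ℝ)
    (hQ0 : ∀ l x, Q l 0 x = 1)
    (hQ1 : ∀ l x, lam l * Q l 1 x = lam l + mu l - x)
    (hQrec : ∀ l n x, lam (n + 1 + l) * Q l (n + 2) x
      = (lam (n + 1 + l) + mu (n + 1 + l) - x) * Q l (n + 1) x - mu (n + 1 + l) * Q l n x)
    (z : ℕ → ℕ → ℕ → ℝ) (xi : ℕ → ℕ → ℝ)
    (hzpos : ∀ l n i, 1 ≤ i → i ≤ n → 0 < z l n i)
    (hzlt : ∀ l n i, 1 ≤ i → i + 1 ≤ n → z l n i < z l n (i + 1))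
    (hzero : ∀ l n i, 1 ≤ i → i ≤ n → Q l n (z l n i) = 0)
    (hzall : ∀ l n, 1 ≤ n → ∀ y, Q l n y = 0 → ∃ i, 1 ≤ i ∧ i ≤ n ∧ y = z l n i)
    (hsep1 : ∀ l n i, 1 ≤ i → i ≤ n → z l (n + 1) i < z l n i)
    (hsep2 : ∀ l n i, 1 ≤ i → i ≤ n → z l n i < z l (n + 1) (i + 1))
    (hxi : ∀ l i, 1 ≤ i → Tendsto (fun n => z l n i) atTop (nhds (xi l i)))
    (Lp : ℕ → ℝ) (hLp : ∀ m, Lp m = ∑ i ∈ Finset.range m, (lam i * pi i)⁻¹)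
    :
    (C ≠ ⊤ → D = ⊤ →
      Linf ≠ ⊤ ∧ (∀ i, 1 ≤ i → 0 < xi 0 i) ∧
        Summable (fun i : ℕ => (xi 0 (i + 1))⁻¹) ∧
        ∀ s : ℝ, s < 0 →
          Multipliable (fun i : ℕ => xi 0 (i + 1) / (xi 0 (i + 1) - s)) ∧
            Tendsto (fun n => 1 / Q 0 n s) atTop
              (nhds ((1 + mu 0 * ∑' i, (lam i * pi i)⁻¹)⁻¹ *
                ∏' i : ℕ, xi 0 (i + 1) / (xi 0 (i + 1) - s)))) ∧
    (C = ⊤ → ∀ s : ℝ, s < 0 → Tendsto (fun n => 1 / Q 0 n s) atTop (nhds 0)) := by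
  have hpip : ∀ n, 0 < pi n := aux_pi_pos hlam hmu hpi0 hpi
  have hq0 : ∀ x, Q 0 0 x = 1 := fun x => hQ0 0 x
  have hq1 : ∀ x, lam 0 * Q 0 1 x = lam 0 + mu 0 - x := fun x => hQ1 0 x
  have hqrec : ∀ n x, lam (n + 1) * Q 0 (n + 2) x
      = (lam (n + 1) + mu (n + 1) - x) * Q 0 (n + 1) x - mu (n + 1) * Q 0 n x := by
    intro n x; simpa using hQrec 0 n x
  -- abbreviations
  set ell : ℕ → ℝ := fun m => (lam m * pi m)⁻¹ with hell
  set Ks : ℕ → ℝ := fun m => ∑ j ∈ Finset.range (m + 1), pi j with hKs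
  set c : ℕ → ℝ := fun m => ell m * Ks m with hcdef
  have hell_pos : ∀ m, 0 < ell m := fun m => inv_pos.2 (mul_pos (hlam m) (hpip m))
  have hKs_pos : ∀ m, 0 < Ks m := fun m => Finset.sum_pos (fun j _ => hpip j) (by simp)
  have hc_pos : ∀ m, 0 < c m := fun m => mul_pos (hell_pos m) (hKs_pos m)
  have hc0 : ∀ m, 0 ≤ c m := fun m => (hc_pos m).le
  have hKofReal : ∀ m, K m = ENNReal.ofReal (Ks m) := by
    intro m
    rw [hK m, hKs]
    rw [ENNReal.ofReal_sum_of_nonneg (fun i _ => (hpip i).le)]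
  have hCre : C = ∑' n, ENNReal.ofReal (c n) := by
    rw [hC]
    apply tsum_congr
    intro n
    have hpn := hlam n
    have hpn2 := hpip n
    rw [hKofReal n, ← ENNReal.ofReal_mul (by positivity : (0:ℝ) ≤ 1 / (lam n * pi n))]
    congr 1
    show 1 / (lam n * pi n) * Ks n = ell n * Ks n
    rw [one_div]
  constructor
  · -- Part (a)
    intro hCtop _hD
    have hsumc : Summable c := by
      apply summable_of_sum_range_le hc0
      intro n
      have h1 : ENNReal.ofReal (∑ i ∈ Finset.range n, c i)
          = ∑ i ∈ Finset.range n, ENNReal.ofReal (c i) :=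
        ENNReal.ofReal_sum_of_nonneg (fun i _ => hc0 i)
      have h2 : ∑ i ∈ Finset.range n, ENNReal.ofReal (c i) ≤ C := by
        rw [hCre]; exact ENNReal.sum_le_tsum _
      exact (ENNReal.ofReal_le_iff_le_toReal hCtop).1 (h1 ▸ h2)
    have hKs1 : ∀ m, 1 ≤ Ks m := by
      intro m
      calc (1:ℝ) = pi 0 := hpi0.symm
        _ ≤ Ks m := Finset.single_le_sum (fun j _ => (hpip j).le) (by simp)
    have hellc : ∀ m, ell m ≤ c m := by
      intro m
      show ell m ≤ ell m * Ks m
      nlinarith [hell_pos m, hKs1 m]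
    have hsuml : Summable ell := Summable.of_nonneg_of_le (fun m => (hell_pos m).le) hellc hsumc
    have hLr0 : 0 ≤ ∑' m, ell m := tsum_nonneg (fun m => (hell_pos m).le)
    have hApos : 0 < 1 + mu 0 * ∑' m, ell m := by nlinarith
    have hLinfTop : Linf ≠ ⊤ := by
      have hle : Linf ≤ C := by
        rw [hLinf, hCre]
        apply ENNReal.tsum_le_tsum
        intro n
        rw [one_div]
        exact ENNReal.ofReal_le_ofReal (hellc n)
      exact ne_top_of_le_ne_top hCtop hle
    -- the a_n formula and limit
    have haaform := aux_a_formula hlam hmu hpi0 hpi hq0 hq1 hqrec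
    have haa1 : ∀ n, 1 ≤ Q 0 n 0 := by
      intro n
      rw [haaform n]
      have : 0 ≤ ∑ m ∈ Finset.range n, (lam m * pi m)⁻¹ :=
        Finset.sum_nonneg (fun m _ => (hell_pos m).le)
      nlinarith
    have haalim : Tendsto (fun n => Q 0 n 0) atTop (𝓝 (1 + mu 0 * ∑' m, ell m)) := by
      have hps : Tendsto (fun n => ∑ m ∈ Finset.range n, ell m) atTop (𝓝 (∑' m, ell m)) :=
        hsuml.hasSum.tendsto_sum_nat
      have h2 := (hps.const_mul (mu 0)).const_add 1
      refine h2.congr (fun n => ?_)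
      rw [haaform n]
    -- the uniform bound E
    set Cr : ℝ := ∑' m, c m with hCr
    set T : ℝ := mu 0 * (∑' m, ell m) + Cr with hT
    set E : ℝ := Real.exp T with hE
    have hCrpos : 0 < Cr := by
      have := Summable.le_tsum hsumc 0 (fun j _ => hc0 j)
      have := hc_pos 0
      linarith
    have hTpos : 0 < T := by nlinarith
    have hE1 : 1 < E := by
      have := Real.add_one_le_exp T
      rw [hE]; linarith
    have hqE : ∀ n, Q 0 n (-1) ≤ E := by
      intro n
      have h := aux_q_upper hlam hmu0 hmu hpi0 hpi hq0 hq1 hqrec (by norm_num : (-1:ℝ) < 0) n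
      refine le_trans h (Real.exp_le_exp.2 ?_)
      have heq : ∀ m ∈ Finset.range n,
          (lam m * pi m)⁻¹ * (mu 0 + (-(-1:ℝ)) * ∑ j ∈ Finset.range (m + 1), pi j)
          = mu 0 * ell m + c m := by
        intro m _
        rw [hell, hcdef, hKs]
        ring
      rw [Finset.sum_congr rfl heq, Finset.sum_add_distrib, ← Finset.mul_sum]
      have h1 : ∑ m ∈ Finset.range n, ell m ≤ ∑' m, ell m :=
        Summable.sum_le_tsum _ (fun m _ => (hell_pos m).le) hsuml
      have h2 : ∑ m ∈ Finset.range n, c m ≤ Cr :=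
        Summable.sum_le_tsum _ (fun m _ => hc0 m) hsumc
      rw [hT]
      nlinarith
    -- ratio formula
    have hratio : ∀ n s', Q 0 n s' = Q 0 n 0 * ∏ i ∈ Finset.Icc 1 n, ((z 0 n i - s') / z 0 n i) :=
      fun n s' => aux_ratio hlam hq0 hq1 hqrec (z 0) (fun n i => hzpos 0 n i)
        (fun n i => hzlt 0 n i) (fun n i => hzero 0 n i) n s'
    have hprodE : ∀ n, ∏ i ∈ Finset.Icc 1 n, (1 + (z 0 n i)⁻¹) ≤ E := by
      intro n
      have h := hratio n (-1)
      have hpe : ∏ i ∈ Finset.Icc 1 n, ((z 0 n i - (-1)) / z 0 n i)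
          = ∏ i ∈ Finset.Icc 1 n, (1 + (z 0 n i)⁻¹) := by
        apply Finset.prod_congr rfl
        intro i hi
        rw [Finset.mem_Icc] at hi
        have hz := hzpos 0 n i hi.1 hi.2
        field_simp
        ring
      rw [hpe] at h
      have hq := hqE n
      have ha1 := haa1 n
      have hpp : 0 ≤ ∏ i ∈ Finset.Icc 1 n, (1 + (z 0 n i)⁻¹) := by
        apply Finset.prod_nonneg
        intro i hi
        rw [Finset.mem_Icc] at hi
        have := hzpos 0 n i hi.1 hi.2
        positivity
      nlinarith
    have hzlb : ∀ n i, 1 ≤ i → i ≤ n → (E - 1)⁻¹ ≤ z 0 n i := by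
      intro n i h1 hin
      have hz := hzpos 0 n i h1 hin
      have hfac : 1 + (z 0 n i)⁻¹ ≤ E := by
        have herase : (1:ℝ) ≤ ∏ j ∈ (Finset.Icc 1 n).erase i, (1 + (z 0 n j)⁻¹) := by
          calc (1:ℝ) = ∏ _j ∈ (Finset.Icc 1 n).erase i, (1:ℝ) := (Finset.prod_const_one).symm
            _ ≤ ∏ j ∈ (Finset.Icc 1 n).erase i, (1 + (z 0 n j)⁻¹) := by
                refine Finset.prod_le_prod (fun j _ => by norm_num) (fun j hj => ?_)
                have hj' := Finset.mem_Icc.1 (Finset.mem_of_mem_erase hj)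
                have hzj := hzpos 0 n j hj'.1 hj'.2
                nlinarith [inv_pos.2 hzj]
        have hmul : (1 + (z 0 n i)⁻¹) * ∏ j ∈ (Finset.Icc 1 n).erase i, (1 + (z 0 n j)⁻¹)
            = ∏ j ∈ Finset.Icc 1 n, (1 + (z 0 n j)⁻¹) :=
          Finset.mul_prod_erase _ (fun j => 1 + (z 0 n j)⁻¹) (Finset.mem_Icc.2 ⟨h1, hin⟩)
        have hEn := hprodE n
        have hzi : (0:ℝ) < 1 + (z 0 n i)⁻¹ := by positivity
        have hstep : (1 + (z 0 n i)⁻¹) * 1 ≤ (1 + (z 0 n i)⁻¹)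
            * ∏ j ∈ (Finset.Icc 1 n).erase i, (1 + (z 0 n j)⁻¹) :=
          mul_le_mul_of_nonneg_left herase hzi.le
        linarith
      have h2 : (z 0 n i)⁻¹ ≤ E - 1 := by linarith
      calc (E - 1)⁻¹ ≤ ((z 0 n i)⁻¹)⁻¹ := by
            apply inv_anti₀ (inv_pos.2 hz) h2
        _ = z 0 n i := inv_inv _
    have hzmono : ∀ i n m, 1 ≤ i → i ≤ n → n ≤ m → z 0 m i ≤ z 0 n i := by
      intro i n m h1 hin hnm
      induction m with
      | zero => have : n = 0 := by omega
                subst this; rfl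
      | succ m ihm =>
        rcases Nat.eq_or_lt_of_le hnm with h | h
        · rw [h]
        · have hnm' : n ≤ m := by omega
          exact le_trans (le_of_lt (hsep1 0 m i h1 (by omega))) (ihm hnm')
    have hxilb : ∀ i, 1 ≤ i → (E - 1)⁻¹ ≤ xi 0 i := by
      intro i h1
      refine ge_of_tendsto (hxi 0 i h1) ?_
      filter_upwards [eventually_ge_atTop i] with n hn
      exact hzlb n i h1 hn
    have hxipos : ∀ i, 1 ≤ i → 0 < xi 0 i := fun i h1 =>
      lt_of_lt_of_le (inv_pos.2 (by linarith)) (hxilb i h1)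
    have hxile : ∀ i n, 1 ≤ i → i ≤ n → xi 0 i ≤ z 0 n i := by
      intro i n h1 hin
      refine le_of_tendsto (hxi 0 i h1) ?_
      filter_upwards [eventually_ge_atTop n] with m hm
      exact hzmono i n m h1 hin hm
    have hsumbound : ∀ n, ∑ i ∈ Finset.Icc 1 n, (z 0 n i)⁻¹ ≤ E - 1 := by
      intro n
      have h := aux_one_add_sum_le_prod (Finset.Icc 1 n) (fun i => (z 0 n i)⁻¹) ?_
      · linarith [hprodE n]
      · intro i hi
        rw [Finset.mem_Icc] at hi
        exact (inv_pos.2 (hzpos 0 n i hi.1 hi.2)).le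
    have hxisum : ∀ m, ∑ i ∈ Finset.Icc 1 m, (xi 0 i)⁻¹ ≤ E - 1 := by
      intro m
      have htend : Tendsto (fun n => ∑ i ∈ Finset.Icc 1 m, (z 0 n i)⁻¹) atTop
          (𝓝 (∑ i ∈ Finset.Icc 1 m, (xi 0 i)⁻¹)) := by
        apply tendsto_finset_sum
        intro i hi
        rw [Finset.mem_Icc] at hi
        exact ((hxi 0 i hi.1).inv₀ (hxipos i hi.1).ne')
      refine le_of_tendsto htend ?_
      filter_upwards [eventually_ge_atTop m] with n hn
      calc ∑ i ∈ Finset.Icc 1 m, (z 0 n i)⁻¹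
          ≤ ∑ i ∈ Finset.Icc 1 n, (z 0 n i)⁻¹ := by
            apply Finset.sum_le_sum_of_subset_of_nonneg
            · exact Finset.Icc_subset_Icc le_rfl hn
            · intro i hi _
              rw [Finset.mem_Icc] at hi
              exact (inv_pos.2 (hzpos 0 n i hi.1 hi.2)).le
        _ ≤ E - 1 := hsumbound n
    have hsummxi : Summable (fun i : ℕ => (xi 0 (i + 1))⁻¹) := by
      apply summable_of_sum_range_le (fun i => (inv_pos.2 (hxipos (i + 1) (by omega))).le)
      intro m
      rw [← aux_Icc_range (fun i => (xi 0 i)⁻¹) m]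
      exact hxisum m
    refine ⟨hLinfTop, hxipos, hsummxi, ?_⟩
    intro s hs
    -- infinite product facts
    have hgden : ∀ i, 1 ≤ i → 0 < xi 0 i - s := fun i h1 => by
      have := hxipos i h1; linarith
    have hgg_pos : ∀ i : ℕ, 0 < xi 0 (i + 1) / (xi 0 (i + 1) - s) := fun i =>
      div_pos (hxipos (i + 1) (by omega)) (hgden (i + 1) (by omega))
    have hgg_le1 : ∀ i : ℕ, xi 0 (i + 1) / (xi 0 (i + 1) - s) ≤ 1 := fun i =>
      (div_le_one (hgden (i + 1) (by omega))).2 (by linarith)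
    set gg : ℕ → ℝ := fun i => xi 0 (i + 1) / (xi 0 (i + 1) - s) with hgg
    set PP : ℕ → ℝ := fun m => ∏ i ∈ Finset.range m, gg i with hPP
    have hPP_pos : ∀ m, 0 < PP m := fun m => Finset.prod_pos (fun i _ => hgg_pos i)
    have hPPanti : Antitone PP := by
      apply antitone_nat_of_succ_le
      intro m
      rw [hPP]
      simp only
      rw [Finset.prod_range_succ]
      exact mul_le_of_le_one_right (hPP_pos m).le (hgg_le1 m)
    have hbdd : BddBelow (Set.range PP) := ⟨0, by rintro x ⟨m, rfl⟩; exact (hPP_pos m).le⟩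
    have hPPlim : Tendsto PP atTop (𝓝 (⨅ m, PP m)) := tendsto_atTop_ciInf hPPanti hbdd
    have hPPlb : ∀ m, (Real.exp ((-s) * (E - 1)))⁻¹ ≤ PP m := by
      intro m
      have h1 : PP m * ∏ i ∈ Finset.range m, (1 + (-s) * (xi 0 (i + 1))⁻¹) = 1 := by
        rw [hPP]
        simp only
        rw [← Finset.prod_mul_distrib]
        rw [Finset.prod_congr rfl (g := fun _ => (1:ℝ)) ?_, Finset.prod_const_one]
        intro i _
        have hx := hxipos (i + 1) (by omega)
        have hd := hgden (i + 1) (by omega)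
        rw [hgg]
        field_simp
        ring
      have h2 : ∏ i ∈ Finset.range m, (1 + (-s) * (xi 0 (i + 1))⁻¹)
          ≤ Real.exp ((-s) * (E - 1)) := by
        refine le_trans (aux_prod_le_exp _ _ (fun i _ => ?_)) (Real.exp_le_exp.2 ?_)
        · have hxx := hxipos (i + 1) (by omega)
          exact mul_nonneg (by linarith) (inv_pos.2 hxx).le
        · rw [← Finset.mul_sum]
          have h3 : ∑ i ∈ Finset.range m, (xi 0 (i + 1))⁻¹ ≤ E - 1 := by
            rw [← aux_Icc_range (fun i => (xi 0 i)⁻¹) m]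
            exact hxisum m
          nlinarith
      have hq2 : 0 < ∏ i ∈ Finset.range m, (1 + (-s) * (xi 0 (i + 1))⁻¹) := by
        apply Finset.prod_pos
        intro i _
        have := hxipos (i + 1) (by omega)
        have : 0 < (xi 0 (i + 1))⁻¹ := by positivity
        nlinarith
      have hPm : PP m = (∏ i ∈ Finset.range m, (1 + (-s) * (xi 0 (i + 1))⁻¹))⁻¹ :=
        eq_inv_of_mul_eq_one_left h1
      rw [hPm]
      exact inv_anti₀ hq2 h2
    have hGpos : 0 < ⨅ m, PP m :=
      lt_of_lt_of_le (inv_pos.2 (Real.exp_pos _)) (le_ciInf hPPlb)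
    have hHasProd : HasProd gg (⨅ m, PP m) := aux_hasProd hgg_pos hgg_le1 hPPlim
    refine ⟨hHasProd.multipliable, ?_⟩
    -- main limit
    have hzds : ∀ n i, 1 ≤ i → i ≤ n → 0 < z 0 n i - s := fun n i h1 hin => by
      have := hzpos 0 n i h1 hin; linarith
    have hqp : ∀ n, 1 / Q 0 n s
        = (Q 0 n 0)⁻¹ * ∏ i ∈ Finset.Icc 1 n, (z 0 n i / (z 0 n i - s)) := by
      intro n
      have h := hratio n s
      have hinvprod : (∏ i ∈ Finset.Icc 1 n, (z 0 n i / (z 0 n i - s)))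
          * ∏ i ∈ Finset.Icc 1 n, ((z 0 n i - s) / z 0 n i) = 1 := by
        rw [← Finset.prod_mul_distrib]
        rw [Finset.prod_congr rfl (g := fun _ => (1:ℝ)) ?_, Finset.prod_const_one]
        intro i hi
        rw [Finset.mem_Icc] at hi
        have h1 := hzpos 0 n i hi.1 hi.2
        have h2 := hzds n i hi.1 hi.2
        field_simp
      have ha := haa1 n
      rw [h, one_div, mul_inv]
      congr 1
      exact (eq_inv_of_mul_eq_one_left hinvprod).symm
    have hp_ge : ∀ n, (⨅ m, PP m) ≤ ∏ i ∈ Finset.Icc 1 n, (z 0 n i / (z 0 n i - s)) := by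
      intro n
      refine le_trans (ciInf_le hbdd n) ?_
      have : PP n = ∏ i ∈ Finset.Icc 1 n, (xi 0 i / (xi 0 i - s)) := by
        rw [hPP]
        simp only
        rw [aux_Icc_range_prod (fun i => xi 0 i / (xi 0 i - s)) n]
      rw [this]
      apply Finset.prod_le_prod
      · intro i hi
        rw [Finset.mem_Icc] at hi
        exact (div_pos (hxipos i hi.1) (hgden i hi.1)).le
      · intro i hi
        rw [Finset.mem_Icc] at hi
        exact aux_ratio_mono hs (hxipos i hi.1) (hxile i n hi.1 hi.2)
    have htends_p : Tendsto (fun n => ∏ i ∈ Finset.Icc 1 n, (z 0 n i / (z 0 n i - s)))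
        atTop (𝓝 (⨅ m, PP m)) := by
      refine tendsto_order.2 ⟨fun a ha => Eventually.of_forall
        (fun n => lt_of_lt_of_le ha (hp_ge n)), fun a ha => ?_⟩
      obtain ⟨m, hm⟩ := exists_lt_of_ciInf_lt ha
      have hPm : PP m = ∏ i ∈ Finset.Icc 1 m, (xi 0 i / (xi 0 i - s)) := by
        rw [hPP]; simp only
        rw [aux_Icc_range_prod (fun i => xi 0 i / (xi 0 i - s)) m]
      rw [hPm] at hm
      have hfin : Tendsto (fun n => ∏ i ∈ Finset.Icc 1 m, (z 0 n i / (z 0 n i - s)))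
          atTop (𝓝 (∏ i ∈ Finset.Icc 1 m, (xi 0 i / (xi 0 i - s)))) := by
        apply tendsto_finset_prod
        intro i hi
        rw [Finset.mem_Icc] at hi
        exact ((hxi 0 i hi.1).div ((hxi 0 i hi.1).sub tendsto_const_nhds)
          (hgden i hi.1).ne')
      filter_upwards [eventually_ge_atTop m, hfin.eventually (eventually_lt_nhds hm)]
        with n hn1 hn2
      refine lt_of_le_of_lt ?_ hn2
      have hsub : Finset.Icc 1 m ⊆ Finset.Icc 1 n := Finset.Icc_subset_Icc le_rfl hn1
      rw [← Finset.prod_sdiff hsub]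
      have hone : ∏ i ∈ Finset.Icc 1 n \ Finset.Icc 1 m, (z 0 n i / (z 0 n i - s)) ≤ 1 := by
        apply Finset.prod_le_one
        · intro i hi
          have hi' := Finset.mem_sdiff.1 hi
          rw [Finset.mem_Icc] at hi'
          exact (div_pos (hzpos 0 n i hi'.1.1 hi'.1.2) (hzds n i hi'.1.1 hi'.1.2)).le
        · intro i hi
          have hi' := Finset.mem_sdiff.1 hi
          rw [Finset.mem_Icc] at hi'
          have h1 := hzpos 0 n i hi'.1.1 hi'.1.2
          have h2 := hzds n i hi'.1.1 hi'.1.2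
          exact (div_le_one h2).2 (by linarith)
      have hpos2 : 0 ≤ ∏ i ∈ Finset.Icc 1 m, (z 0 n i / (z 0 n i - s)) := by
        apply Finset.prod_nonneg
        intro i hi
        rw [Finset.mem_Icc] at hi
        exact (div_pos (hzpos 0 n i hi.1 (le_trans hi.2 hn1))
          (hzds n i hi.1 (le_trans hi.2 hn1))).le
      calc (∏ i ∈ Finset.Icc 1 n \ Finset.Icc 1 m, (z 0 n i / (z 0 n i - s)))
            * ∏ i ∈ Finset.Icc 1 m, (z 0 n i / (z 0 n i - s))
          ≤ 1 * ∏ i ∈ Finset.Icc 1 m, (z 0 n i / (z 0 n i - s)) :=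
            mul_le_mul_of_nonneg_right hone hpos2
        _ = ∏ i ∈ Finset.Icc 1 m, (z 0 n i / (z 0 n i - s)) := one_mul _
    have hfinal : Tendsto (fun n => (Q 0 n 0)⁻¹
          * ∏ i ∈ Finset.Icc 1 n, (z 0 n i / (z 0 n i - s))) atTop
        (𝓝 ((1 + mu 0 * ∑' m, ell m)⁻¹ * (⨅ m, PP m))) :=
      (haalim.inv₀ hApos.ne').mul htends_p
    rw [hHasProd.tprod_eq]
    exact hfinal.congr (fun n => (hqp n).symm)
  · -- Part (b)
    intro hCtop s hs
    have hnotsum : ¬ Summable c := by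
      intro hsum
      have h := ENNReal.ofReal_tsum_of_nonneg hc0 hsum
      rw [← hCre, hCtop] at h
      exact ENNReal.ofReal_ne_top h
    have htends : Tendsto (fun n => ∑ i ∈ Finset.range n, c i) atTop atTop :=
      (not_summable_iff_tendsto_nat_atTop_of_nonneg hc0).1 hnotsum
    have hlow := aux_q_lower hlam hmu0 hmu hpi0 hpi hq0 hq1 hqrec hs
    have hlow' : ∀ n, 1 + (-s) * ∑ i ∈ Finset.range n, c i ≤ Q 0 n s := by
      intro n
      have := hlow n
      simpa [hcdef, hell, hKs] using this
    have htop2 : Tendsto (fun n => 1 + (-s) * ∑ i ∈ Finset.range n, c i) atTop atTop :=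
      tendsto_atTop_add_const_left _ 1
        (Tendsto.const_mul_atTop (show (0:ℝ) < -s by linarith) htends)
    have hQtop : Tendsto (fun n => Q 0 n s) atTop atTop := tendsto_atTop_mono hlow' htop2
    have := hQtop.inv_tendsto_atTop
    simp only [one_div]
    exact this
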